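/- There exist a standard Borel space X and two Borel functions f, g : X → X such that the equivalence relation generated by f and g is a complete analytic (Σ¹₁-complete) subset of X × X; in particular it is analytic but not Borel. -/

import Mathlib

open MeasureTheory Set

/-- A subset of the quotient is Borel iff its preimage under the projection is Borel. -/
def QBorelSet {X : Type} [MeasurableSpace X] (E : Setoid X) (A : Set (Quotient E)) : Prop :=
  MeasurableSet (Quotient.mk E ⁻¹' A)

/-- A relation between quotient Borel spaces is Borel iff its pullback to the
product of the standard Borel spaces is Borel. -/
def QBorelRel {X Y : Type} [MeasurableSpace X] [MeasurableSpace Y]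
    (E : Setoid X) (F : Setoid Y) (R : Set (Quotient E × Quotient F)) : Prop :=
  MeasurableSet {p : X × Y | (Quotient.mk E p.1, Quotient.mk F p.2) ∈ R}

/-- A function between quotient Borel spaces is Borel iff its graph is a Borel relation. -/
def QBorelFun {X Y : Type} [MeasurableSpace X] [MeasurableSpace Y]
    (E : Setoid X) (F : Setoid Y) (f : Quotient E → Quotient F) : Prop :=
  MeasurableSet {p : X × Y | f (Quotient.mk E p.1) = Quotient.mk F p.2}

/-- `E` is a countable Borel equivalence relation. -/
def CBER {X : Type} [MeasurableSpace X] (E : Setoid X) : Prop :=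
  MeasurableSet {p : X × X | E.r p.1 p.2} ∧ ∀ x : X, {y | E.r x y}.Countable

/-- `E` is smooth: Borel reducible to equality on some standard Borel space. -/
def SmoothRel {X : Type} [MeasurableSpace X] (E : Setoid X) : Prop :=
  ∃ (Y : Type) (_ : MeasurableSpace Y) (_ : StandardBorelSpace Y) (f : X → Y),
    Measurable f ∧ ∀ x y : X, E.r x y ↔ f x = f y

/-- Analytic (Σ¹₁) subsets of a standard Borel space: the empty set or a Borel image of
Baire space. -/
def IsSigma11 {α : Type} [MeasurableSpace α] (s : Set α) : Prop :=
  s = ∅ ∨ ∃ g : (ℕ → ℕ) → α, Measurable g ∧ Set.range g = s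


open Filter Topology

namespace Stmt12Aux

abbrev N' := ℕ → ℕ

noncomputable section

lemma anal_union {α : Type*} [TopologicalSpace α] {s t : Set α}
    (hs : AnalyticSet s) (ht : AnalyticSet t) : AnalyticSet (s ∪ t) := by
  rw [Set.union_eq_iUnion]
  exact AnalyticSet.iUnion fun b => by cases b <;> simpa

lemma anal_prod {α β : Type*} [TopologicalSpace α] [TopologicalSpace β] {s : Set α} {t : Set β}
    (hs : AnalyticSet s) (ht : AnalyticSet t) : AnalyticSet (s ×ˢ t) := by
  obtain ⟨γ, tγ, pγ, f, fc, rfl⟩ := analyticSet_iff_exists_polishSpace_range.1 hs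
  obtain ⟨δ, tδ, pδ, g, gc, rfl⟩ := analyticSet_iff_exists_polishSpace_range.1 ht
  rw [← Set.range_prodMap]
  exact analyticSet_range_of_polishSpace (fc.prodMap gc)

def e (n : ℕ) (z y : N') : ℕ := Encodable.encode (List.ofFn fun i : Fin n => (z i, y i))

lemma e_eq {n n' : ℕ} {z y z' y' : N'} (h : e n z y = e n' z' y') :
    n = n' ∧ ∀ i, ∀ hi : i < n, z i = z' i ∧ y i = y' i := by
  have hl := Encodable.encode_injective h
  have hn : n = n' := by simpa using congrArg List.length hl
  subst hn
  have hfn := List.ofFn_inj.1 hl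
  refine ⟨rfl, fun i hi => ?_⟩
  have h2 := congrFun hfn ⟨i, hi⟩
  exact ⟨congrArg Prod.fst h2, congrArg Prod.snd h2⟩

def Fset (x : N') : Set (N' × N') := {p | ∀ n, x (e n p.1 p.2) = 0}

lemma exists_code {F : Set (N' × N')} (hF : IsClosed F) : ∃ x : N', Fset x = F := by
  classical
  refine ⟨fun m => if ∃ n, ∃ p ∈ F, e n p.1 p.2 = m then 0 else 1, ?_⟩
  ext q
  constructor
  · intro hq
    have key : ∀ n, ∃ p ∈ F, ∀ i, ∀ hi : i < n, p.1 i = q.1 i ∧ p.2 i = q.2 i := by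
      intro n
      have h0 : (if ∃ n', ∃ p ∈ F, e n' p.1 p.2 = e n q.1 q.2 then 0 else 1) = 0 := hq n
      by_cases hc : ∃ n', ∃ p ∈ F, e n' p.1 p.2 = e n q.1 q.2
      · obtain ⟨n', p, hpF, hpe⟩ := hc
        obtain ⟨hnn, hag⟩ := e_eq hpe
        subst hnn
        exact ⟨p, hpF, hag⟩
      · rw [if_neg hc] at h0
        exact absurd h0 one_ne_zero
    choose p hpF hag using key
    have h1 : Tendsto (fun n => (p n).1) atTop (𝓝 q.1) := by
      rw [tendsto_pi_nhds]
      intro i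
      refine tendsto_const_nhds.congr' ?_
      filter_upwards [eventually_ge_atTop (i + 1)] with n hn
      exact ((hag n i (by omega)).1).symm
    have h2 : Tendsto (fun n => (p n).2) atTop (𝓝 q.2) := by
      rw [tendsto_pi_nhds]
      intro i
      refine tendsto_const_nhds.congr' ?_
      filter_upwards [eventually_ge_atTop (i + 1)] with n hn
      exact ((hag n i (by omega)).2).symm
    exact hF.mem_of_tendsto (h1.prodMk_nhds h2) (Filter.Eventually.of_forall hpF)
  · intro hq n
    exact if_pos ⟨n, q, hq, rfl⟩

def D : Set (N' × N' × N') := {t | ∀ n, t.1 (e n t.2.1 t.2.2) = 0}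

lemma measurable_e (n : ℕ) : Measurable (fun t : N' × N' × N' => e n t.2.1 t.2.2) := by
  have h1 : Measurable (fun t : N' × N' × N' => fun i : Fin n => (t.2.1 i, t.2.2 i)) :=
    measurable_pi_lambda _ fun i =>
      ((measurable_pi_apply (i : ℕ)).comp (measurable_fst.comp measurable_snd)).prodMk
        ((measurable_pi_apply (i : ℕ)).comp (measurable_snd.comp measurable_snd))
  exact (measurable_of_countable
    (fun v : Fin n → ℕ × ℕ => Encodable.encode (List.ofFn v))).comp h1

lemma measurable_D : MeasurableSet D := by
  have hD : D = ⋂ n, ⋃ m, ((fun t : N' × N' × N' => e n t.2.1 t.2.2) ⁻¹' {m}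
      ∩ {t : N' × N' × N' | t.1 m = 0}) := by
    ext t
    simp only [D, mem_setOf_eq, mem_iInter, mem_iUnion, mem_inter_iff, mem_preimage,
      mem_singleton_iff]
    constructor
    · intro h n
      exact ⟨e n t.2.1 t.2.2, rfl, h n⟩
    · intro h n
      obtain ⟨m, hm, h0⟩ := h n
      rw [hm]; exact h0
  rw [hD]
  exact MeasurableSet.iInter fun n => MeasurableSet.iUnion fun m =>
    ((measurable_e n) (measurableSet_singleton m)).inter
      (((measurable_pi_apply m).comp measurable_fst) (measurableSet_singleton 0))

def U : Set (N' × N') := {p | ∃ y, (p.2, y) ∈ Fset p.1}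

lemma anal_U : AnalyticSet U := by
  have hU : U = (fun t : N' × N' × N' => (t.1, t.2.1)) '' D := by
    ext p
    constructor
    · rintro ⟨y, hy⟩
      exact ⟨(p.1, p.2, y), hy, rfl⟩
    · rintro ⟨t, ht, rfl⟩
      exact ⟨t.2.2, ht⟩
  rw [hU]
  exact measurable_D.analyticSet_image
    (measurable_fst.prodMk (measurable_fst.comp measurable_snd))

lemma exists_section {A' : Set N'} (hA : AnalyticSet A') :
    ∃ x : N', ∀ z, z ∈ A' ↔ (x, z) ∈ U := by
  rw [AnalyticSet_def] at hA
  rcases hA with rfl | ⟨f, fc, rfl⟩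
  · obtain ⟨x, hx⟩ := exists_code (isClosed_empty : IsClosed (∅ : Set (N' × N')))
    refine ⟨x, fun z => ?_⟩
    simp only [mem_empty_iff_false, false_iff]
    rintro ⟨y, hy⟩
    rw [hx] at hy
    exact hy
  · have hcl : IsClosed {p : N' × N' | f p.2 = p.1} :=
      isClosed_eq (fc.comp continuous_snd) continuous_fst
    obtain ⟨x, hx⟩ := exists_code hcl
    refine ⟨x, fun z => ?_⟩
    constructor
    · rintro ⟨y, rfl⟩
      exact ⟨y, by rw [hx]; exact rfl⟩
    · rintro ⟨y, hy⟩
      rw [hx] at hy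
      exact ⟨y, hy⟩

lemma not_meas_U : ¬ MeasurableSet U := by
  intro hU
  have hdiag : Measurable (fun x : N' => (x, x)) := measurable_id.prodMk measurable_id
  have hVm : MeasurableSet {x : N' | (x, x) ∉ U} := hdiag hU.compl
  obtain ⟨x, hx⟩ := exists_section hVm.analyticSet
  have h := hx x
  simp only [mem_setOf_eq] at h
  exact iff_not_self h.symm

def pair (p : N' × N') : N' := fun n => if Even n then p.1 (n / 2) else p.2 (n / 2)

lemma pair_cont : Continuous pair := by
  apply continuous_pi
  intro n
  by_cases h : Even n
  · simp only [pair, if_pos h]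
    exact (continuous_apply _).comp continuous_fst
  · simp only [pair, if_neg h]
    exact (continuous_apply _).comp continuous_snd

lemma pair_inj : Function.Injective pair := by
  intro p q h
  have h1 : p.1 = q.1 := funext fun i => by
    have hc := congrFun h (2 * i)
    have he : Even (2 * i) := even_two_mul i
    have hd : 2 * i / 2 = i := by omega
    simpa only [pair, if_pos he, hd] using hc
  have h2 : p.2 = q.2 := funext fun i => by
    have hc := congrFun h (2 * i + 1)
    have he : ¬ Even (2 * i + 1) := by simp [Nat.even_add_one]
    have hd : (2 * i + 1) / 2 = i := by omega
    simpa only [pair, if_neg he, hd] using hc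
  exact Prod.ext h1 h2

end
end Stmt12Aux

namespace Stmt12Aux

def Aset : Set N' := pair '' U

lemma anal_A : AnalyticSet Aset := anal_U.image_of_continuous pair_cont

lemma A_nonempty : Aset.Nonempty :=
  ⟨pair ((fun _ => 0), (fun _ => 0)),
    ⟨((fun _ => 0), (fun _ => 0)), ⟨(fun _ => 0), fun _ => rfl⟩, rfl⟩⟩

lemma not_meas_A : ¬ MeasurableSet Aset := by
  intro h
  apply not_meas_U
  have hUp : U = pair ⁻¹' Aset := by
    ext p
    exact (pair_inj.mem_set_image).symm
  rw [hUp]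
  exact pair_cont.measurable h

lemma reduce_A {A' : Set N'} (hA : AnalyticSet A') :
    ∃ x : N', ∀ z, z ∈ A' ↔ pair (x, z) ∈ Aset := by
  obtain ⟨x, hx⟩ := exists_section hA
  exact ⟨x, fun z => (hx z).trans pair_inj.mem_set_image.symm⟩

end Stmt12Aux

instance : PolishSpace (((ℕ → ℕ) × Bool) × (ℕ → ℕ) × Bool) := inferInstance

open Stmt12Aux

/-- there are a standard Borel space `X` and Borel maps `f, g : X → X` whose
generated equivalence relation is a Σ¹₁-complete subset of `X × X`; in particular it is
analytic but not Borel. -/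
theorem stmt_12 :
    ∃ (X : Type) (_ : MeasurableSpace X) (_ : StandardBorelSpace X) (f g : X → X),
      Measurable f ∧ Measurable g ∧
      ∃ R : X → X → Prop, Equivalence R ∧
        (∀ x, R x (f x)) ∧ (∀ x, R x (g x)) ∧
        (∀ S : X → X → Prop, Equivalence S → (∀ x, S x (f x)) → (∀ x, S x (g x)) →
          ∀ x y, R x y → S x y) ∧
        IsSigma11 {p : X × X | R p.1 p.2} ∧
        ¬ MeasurableSet {p : X × X | R p.1 p.2} ∧
        ∀ A : Set (ℕ → ℕ), IsSigma11 A →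
          ∃ ρ : (ℕ → ℕ) → X × X, Measurable ρ ∧ ∀ z, z ∈ A ↔ R (ρ z).1 (ρ z).2 := by
  classical
  -- extract a continuous surjection onto Aset and a base point
  have hA := anal_A
  rw [AnalyticSet_def] at hA
  rcases hA with hemp | ⟨f₀, hf₀c, hf₀r⟩
  · exact absurd hemp A_nonempty.ne_empty
  obtain ⟨x₀, hx₀⟩ := A_nonempty
  -- the space and functions
  refine ⟨(ℕ → ℕ) × Bool, inferInstance, inferInstance,
    (fun p => if p.2 = true then p else (f₀ p.1, true)),
    (fun p => if p.2 = true then p else (x₀, true)), ?_, ?_, ?_⟩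
  · exact Measurable.ite (measurable_snd (measurableSet_singleton true)) measurable_id
      ((hf₀c.measurable.comp measurable_fst).prodMk measurable_const)
  · exact Measurable.ite (measurable_snd (measurableSet_singleton true)) measurable_id
      measurable_const
  set B : Set ((ℕ → ℕ) × Bool) := {p | p.2 = false ∨ p.1 ∈ Aset} with hBdef
  refine ⟨fun p q => p = q ∨ (p ∈ B ∧ q ∈ B), ?_, ?_, ?_, ?_, ?_, ?_, ?_⟩
  · -- equivalence
    refine ⟨fun x => Or.inl rfl, ?_, ?_⟩
    · rintro x y (rfl | ⟨h1, h2⟩)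
      · exact Or.inl rfl
      · exact Or.inr ⟨h2, h1⟩
    · rintro x y z (rfl | ⟨h1, h2⟩) (rfl | ⟨h3, h4⟩)
      · exact Or.inl rfl
      · exact Or.inr ⟨h3, h4⟩
      · exact Or.inr ⟨h1, h2⟩
      · exact Or.inr ⟨h1, h4⟩
  · -- R x (f x)
    rintro ⟨a, b⟩
    cases b
    · refine Or.inr ⟨Or.inl rfl, ?_⟩
      simp only [if_neg (Bool.false_ne_true)]
      exact Or.inr (hf₀r ▸ mem_range_self a)
    · exact Or.inl (by simp)
  · -- R x (g x)
    rintro ⟨a, b⟩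
    cases b
    · exact Or.inr ⟨Or.inl rfl, by simp only [if_neg (Bool.false_ne_true)]; exact Or.inr hx₀⟩
    · exact Or.inl (by simp)
  · -- minimality
    intro S hS hSf hSg
    have key : ∀ p : (ℕ → ℕ) × Bool, p ∈ B → S p (x₀, true) := by
      rintro ⟨a, b⟩ hp
      cases b
      · have := hSg (a, false)
        simpa only [if_neg (Bool.false_ne_true)] using this
      · have ha : a ∈ Aset := by
          rcases hp with h | h
          · exact absurd h (by simp)
          · exact h
        rw [← hf₀r] at ha
        obtain ⟨w, hw⟩ := ha
        have h1 : S (w, false) (a, true) := by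
          have := hSf (w, false)
          simpa only [if_neg (Bool.false_ne_true), hw] using this
        have h2 : S (w, false) (x₀, true) := by
          have := hSg (w, false)
          simpa only [if_neg (Bool.false_ne_true)] using this
        exact hS.trans (hS.symm h1) h2
    rintro x y (rfl | ⟨h1, h2⟩)
    · exact hS.refl x
    · exact hS.trans (key x h1) (hS.symm (key y h2))
  · -- IsSigma11
    have hBanal : AnalyticSet B := by
      have hB2 : B = {p : (ℕ → ℕ) × Bool | p.2 = false} ∪ (fun a => (a, true)) '' Aset := by
        ext ⟨a, b⟩
        cases b
        · simp [hBdef]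
        · constructor
          · rintro (h | h)
            · exact absurd h (by simp)
            · exact Or.inr ⟨a, h, rfl⟩
          · rintro (h | ⟨a', ha', he⟩)
            · exact absurd h (by simp)
            · exact Or.inr (by rw [← (congrArg Prod.fst he : a' = a)]; exact ha')
      rw [hB2]
      exact anal_union ((measurable_snd (measurableSet_singleton false)).analyticSet)
        (anal_A.image_of_continuous (continuous_id.prodMk continuous_const))
    have hRanal : AnalyticSet {p : ((ℕ → ℕ) × Bool) × ((ℕ → ℕ) × Bool) | p.1 = p.2 ∨ (p.1 ∈ B ∧ p.2 ∈ B)} := by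
      have hsplit : {p : ((ℕ → ℕ) × Bool) × ((ℕ → ℕ) × Bool) | p.1 = p.2 ∨ (p.1 ∈ B ∧ p.2 ∈ B)}
          = {p : ((ℕ → ℕ) × Bool) × ((ℕ → ℕ) × Bool) | p.1 = p.2} ∪ B ×ˢ B := rfl
      rw [hsplit]
      exact anal_union ((isClosed_eq continuous_fst continuous_snd).measurableSet.analyticSet)
        (anal_prod hBanal hBanal)
    rw [AnalyticSet_def] at hRanal
    rcases hRanal with h | ⟨F, hFc, hFr⟩
    · exact Or.inl h
    · exact Or.inr ⟨F, hFc.measurable, hFr⟩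
  · -- not Borel
    intro hmeas
    apply not_meas_A
    have hBmeas : MeasurableSet B := by
      have hBp : B = (fun q : (ℕ → ℕ) × Bool => ((x₀, true), q)) ⁻¹' {p : ((ℕ → ℕ) × Bool) × ((ℕ → ℕ) × Bool) | p.1 = p.2 ∨ (p.1 ∈ B ∧ p.2 ∈ B)} := by
        ext q
        simp only [mem_preimage, mem_setOf_eq]
        constructor
        · intro hq
          exact Or.inr ⟨Or.inr hx₀, hq⟩
        · rintro (rfl | ⟨-, hq⟩)
          · exact Or.inr hx₀
          · exact hq
      rw [hBp]
      exact (measurable_const.prodMk measurable_id) hmeas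
    have hAp : Aset = (fun a : ℕ → ℕ => ((a, true) : (ℕ → ℕ) × Bool)) ⁻¹' B := by
      ext a
      simp [hBdef]
    rw [hAp]
    exact (measurable_id.prodMk measurable_const) hBmeas
  · -- completeness
    intro A' hA'
    have hA'anal : AnalyticSet A' := by
      rcases hA' with rfl | ⟨G, hG, rfl⟩
      · exact analyticSet_empty
      · rw [← image_univ]
        exact MeasurableSet.univ.analyticSet_image hG
    obtain ⟨x, hx⟩ := reduce_A hA'anal
    refine ⟨fun z => ((pair (x, z), true), (x₀, true)), ?_, ?_⟩
    · exact ((pair_cont.measurable.comp (measurable_const.prodMk measurable_id)).prodMk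
        measurable_const).prodMk measurable_const
    · intro z
      rw [hx z]
      constructor
      · intro h
        exact Or.inr ⟨Or.inr h, Or.inr hx₀⟩
      · rintro (h | ⟨hb, -⟩)
        · have : pair (x, z) = x₀ := congrArg Prod.fst h
          rw [this]; exact hx₀
        · rcases hb with h | h
          · exact absurd h (by simp)
          · exact h
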